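/- Descent lemma: for all functions f, g : ℕ → ℕ and every natural number n, either D(I(n)) holds or Φ(I(n)) < Φ(n). -/

import Mathlib

def Mini (f : ℕ → ℕ) : ℕ → ℕ
  | 0 => 0
  | n + 1 => if f (Mini f n) ≤ f (n + 1) then Mini f n else n + 1

def Psi (f g : ℕ → ℕ) (n : ℕ) : ℕ := max (f (Mini g n)) (g (Mini f n))

def Phi (f g : ℕ → ℕ) (n : ℕ) : ℕ := f (Mini f n) + g (Mini g n)

def I (f g : ℕ → ℕ) (n : ℕ) : ℕ := n + (Psi f g n) ^ 2 + 1

def D (f g : ℕ → ℕ) (n : ℕ) : Prop :=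
  ∃ i j, i < j ∧ j ≤ n ∧ f i ≤ f j ∧ g i ≤ g j

lemma Mini_le (f : ℕ → ℕ) (n : ℕ) : Mini f n ≤ n := by
  induction n with
  | zero => simp [Mini]
  | succ m ih =>
    simp only [Mini]
    split
    · omega
    · omega

lemma Mini_min (f : ℕ → ℕ) (n : ℕ) : ∀ k ≤ n, f (Mini f n) ≤ f k := by
  induction n with
  | zero => intro k hk; interval_cases k; simp [Mini]
  | succ m ih =>
    intro k hk
    simp only [Mini]
    split
    · rename_i hc
      rcases Nat.eq_or_lt_of_le hk with h | h
      · rw [h]; exact hc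
      · exact ih k (by omega)
    · rename_i hc
      rcases Nat.eq_or_lt_of_le hk with h | h
      · rw [h]
      · have := ih k (by omega); omega

lemma Mini_eq_of_val_eq (f : ℕ → ℕ) {n m : ℕ} (h : n ≤ m)
    (hv : f (Mini f m) = f (Mini f n)) : Mini f m = Mini f n := by
  induction m with
  | zero => have : n = 0 := by omega
            subst this; rfl
  | succ p ih =>
    rcases Nat.eq_or_lt_of_le h with h' | h'
    · rw [h']
    have hn : n ≤ p := by omega
    have hmin2 : f (Mini f p) ≤ f (Mini f n) :=
      Mini_min f p _ (le_trans (Mini_le f n) hn)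
    simp only [Mini] at hv ⊢
    split
    · rename_i hcond
      simp only [Mini, if_pos hcond] at hv
      exact ih hn hv
    · rename_i hcond
      simp only [Mini, if_neg hcond] at hv
      omega

theorem descent (f g : ℕ → ℕ) (n : ℕ) :
    D f g (I f g n) ∨ Phi f g (I f g n) < Phi f g n := by
  by_contra hc
  push_neg at hc
  obtain ⟨hD, hΦ⟩ := hc
  set N := I f g n with hN
  have hnN : n ≤ N := by simp [hN, I]; omega
  have hf1 : f (Mini f N) ≤ f (Mini f n) := Mini_min f N _ (le_trans (Mini_le f n) hnN)
  have hg1 : g (Mini g N) ≤ g (Mini g n) := Mini_min g N _ (le_trans (Mini_le g n) hnN)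
  have hfe : f (Mini f N) = f (Mini f n) := by
    simp only [Phi] at hΦ; omega
  have hge : g (Mini g N) = g (Mini g n) := by
    simp only [Phi] at hΦ; omega
  have hfa : Mini f N = Mini f n := Mini_eq_of_val_eq f hnN hfe
  have hga : Mini g N = Mini g n := Mini_eq_of_val_eq g hnN hge
  simp only [D, not_exists] at hD
  push_neg at hD
  set a := Mini f n with ha
  set b := Mini g n with hb
  set P := Psi f g n with hP
  have hbound : ∀ k, n < k → k ≤ N → f k < P ∧ g k < P := by
    intro k hk1 hk2
    have hak : a < k := lt_of_le_of_lt (le_trans (Mini_le f n) (le_refl n)) hk1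
    have hbk : b < k := lt_of_le_of_lt (le_trans (Mini_le g n) (le_refl n)) hk1
    have hfa' : f a ≤ f k := by rw [← hfa]; exact Mini_min f N k hk2
    have hgb' : g b ≤ g k := by rw [← hga]; exact Mini_min g N k hk2
    have h1 : g k < g a := hD a k hak hk2 hfa'
    have h2 : f k < f b := by
      by_contra hcon
      exact absurd hgb' (not_le_of_gt (hD b k hbk hk2 (by omega)))
    constructor
    · exact lt_of_lt_of_le h2 (le_max_left _ _)
    · exact lt_of_lt_of_le h1 (le_max_right _ _)
  -- pigeonhole on Ioc n N
  have hcard : ((Finset.range P) ×ˢ (Finset.range P)).card < (Finset.Ioc n N).card := by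
    simp [Nat.card_Ioc, hN, I]
    ring_nf
    have : P ^ 2 = Psi f g n ^ 2 := by rw [hP]
    omega
  have hmaps : ∀ k ∈ Finset.Ioc n N, (f k, g k) ∈ (Finset.range P) ×ˢ (Finset.range P) := by
    intro k hk
    simp only [Finset.mem_Ioc] at hk
    obtain ⟨h1, h2⟩ := hbound k hk.1 hk.2
    simp [Finset.mem_product, h1, h2]
  obtain ⟨i, hi, j, hj, hij, heq⟩ :=
    Finset.exists_ne_map_eq_of_card_lt_of_maps_to hcard hmaps
  simp only [Finset.mem_Ioc] at hi hj
  have heqf : f i = f j := congrArg Prod.fst heq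
  have heqg : g i = g j := congrArg Prod.snd heq
  rcases lt_or_gt_of_ne hij with h | h
  · exact absurd (le_of_eq heqg) (not_le_of_gt (hD i j h hj.2 (le_of_eq heqf)))
  · exact absurd (le_of_eq heqg.symm) (not_le_of_gt (hD j i h hi.2 (le_of_eq heqf.symm)))
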